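/- Let G and F be finite simple directed graphs without self-loops, with F on vertex set [m] = {1,…,m}, m ≥ 1, and let t ≥ 1, r ≥ 0 be integers. If there exists a (t, r) index code for the lexicographic product G ∘ F, then ⌊log₂ ω(Γ_t(F))⌋ · β(G) ≤ r. -/

import Mathlib

namespace IC

/-- Two message tuples (with `x_i ∈ {0,…,q−1}^{t_i}`) are confusable at
position `l` of node `j` for the directed graph with edge relation `E`. -/
def ConfusableAt {n q : ℕ} (E : Fin n → Fin n → Prop) (t : Fin n → ℕ)
    (j : Fin n) (l : Fin (t j))
    (x z : ∀ i : Fin n, Fin (t i) → Fin q) : Prop :=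
  x j l ≠ z j l ∧ ∀ i : Fin n, E i j → x i = z i

/-- The component confusion graph `Γ_t^{(jl)}(G)`. -/
def componentConfusionGraph {n : ℕ} (q : ℕ) (E : Fin n → Fin n → Prop) (t : Fin n → ℕ)
    (j : Fin n) (l : Fin (t j)) :
    SimpleGraph (∀ i : Fin n, Fin (t i) → Fin q) where
  Adj x z := ConfusableAt E t j l x z
  symm := ⟨fun _ _ ⟨h1, h2⟩ => ⟨h1.symm, fun i hi => (h2 i hi).symm⟩⟩
  loopless := ⟨fun _ ⟨h1, _⟩ => h1 rfl⟩

/-- The confusion graph `Γ_t(G)`. -/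
def confusionGraph {n : ℕ} (q : ℕ) (E : Fin n → Fin n → Prop) (t : Fin n → ℕ) :
    SimpleGraph (∀ i : Fin n, Fin (t i) → Fin q) where
  Adj x z := ∃ (j : Fin n) (l : Fin (t j)), ConfusableAt E t j l x z
  symm := ⟨fun _ _ ⟨j, l, h1, h2⟩ => ⟨j, l, h1.symm, fun i hi => (h2 i hi).symm⟩⟩
  loopless := ⟨fun _ ⟨_, _, h1, _⟩ => h1 rfl⟩

end IC
namespace IC

/-- A `(t, r)` index code (with per-message lengths `t j` bits and index length
`r` bits) exists for the directed graph with edge relation `E` on vertex set `V`: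
there are an encoder `φ` and, for each node `j`, a decoder `ψ j` that recovers
message `x j` from the index `φ x` and the side information `(x i)_{i ∈ A_j}`. -/
def HasCode {V : Type*} (E : V → V → Prop) (t : V → ℕ) (r : ℕ) : Prop :=
  ∃ (φ : (∀ j : V, Fin (t j) → Fin 2) → (Fin r → Fin 2))
    (ψ : ∀ j : V, (Fin r → Fin 2) → (∀ i : {i : V // E i j}, Fin (t i.1) → Fin 2) →
      (Fin (t j) → Fin 2)),
    ∀ (x : ∀ j : V, Fin (t j) → Fin 2) (j : V),
      ψ j (φ x) (fun i => x i.1) = x j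

/-- The broadcast rate `β = inf { r/t : a (t, r) index code exists }`. -/
noncomputable def broadcastRate {V : Type*} (E : V → V → Prop) : ℝ :=
  sInf {ρ : ℝ | ∃ (t r : ℕ), 1 ≤ t ∧ HasCode E (fun _ => t) r ∧ ρ = (r : ℝ) / t}

end IC
namespace IC

/-- The lexicographic product `G ∘ F` of two directed graphs. -/
def lexProd {V W : Type*} (GE : V → V → Prop) (FE : W → W → Prop) :
    V × W → V × W → Prop :=
  fun x y => GE x.1 y.1 ∨ (x.1 = y.1 ∧ FE x.2 y.2)

end IC


namespace IC

lemma hasCode_of_clique {V : Type} (GE : V → V → Prop)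
    (m t r : ℕ) (FE : Fin m → Fin m → Prop)
    (hcode : IC.HasCode (IC.lexProd GE FE) (fun _ => t) r)
    (k : ℕ)
    (hk : 2 ^ k ≤ (IC.confusionGraph 2 FE (fun _ : Fin m => t)).cliqueNum) :
    IC.HasCode GE (fun _ => k) r := by
  classical
  obtain ⟨s, hs⟩ := (IC.confusionGraph 2 FE (fun _ : Fin m => t)).exists_isNClique_cliqueNum
  have hcard : Fintype.card (Fin k → Fin 2) ≤ Fintype.card ↥s := by
    simpa [hs.card_eq] using hk
  obtain ⟨ι⟩ := Function.Embedding.nonempty_of_card_le hcard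
  obtain ⟨φ, ψ, hψ⟩ := hcode
  set msg : (∀ _ : V, Fin k → Fin 2) → (∀ _ : V × Fin m, Fin t → Fin 2) :=
    fun y p => (ι (y p.1) : ∀ i : Fin m, Fin t → Fin 2) p.2 with hmsg
  have key : ∀ (v : V) (y y' : ∀ _ : V, Fin k → Fin 2),
      (∀ i, GE i v → y i = y' i) → φ (msg y) = φ (msg y') → y v = y' v := by
    intro v y y' hagree hφ
    by_contra hne
    have hιne : ((ι (y v) : ↥s) : ∀ i : Fin m, Fin t → Fin 2)
        ≠ ((ι (y' v) : ↥s) : ∀ i : Fin m, Fin t → Fin 2) := by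
      intro h
      exact hne (ι.injective (Subtype.ext h))
    have hadj := hs.isClique (ι (y v)).2 (ι (y' v)).2 hιne
    obtain ⟨j, l, hl, hconf⟩ := hadj
    have hside : (fun i : {i // IC.lexProd GE FE i (v, j)} => msg y i.1)
        = (fun i : {i // IC.lexProd GE FE i (v, j)} => msg y' i.1) := by
      funext i
      obtain ⟨⟨u, w⟩, hi⟩ := i
      rcases hi with hGE | ⟨heq, hFE⟩
      · show (ι (y u) : ∀ i : Fin m, Fin t → Fin 2) w = _
        rw [hagree u hGE]
      · simp only at heq
        subst heq
        exact hconf w hFE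
    have h1 := hψ (msg y) (v, j)
    have h2 := hψ (msg y') (v, j)
    rw [hside, hφ] at h1
    rw [h1] at h2
    exact hl (congrFun h2 l)
  refine ⟨fun y => φ (msg y), fun v c si =>
    if h : ∃ y : ∀ _ : V, Fin k → Fin 2,
        φ (msg y) = c ∧ ∀ i : {i // GE i v}, y i.1 = si i
      then h.choose v else fun _ => 0, ?_⟩
  intro y v
  dsimp only
  have hex : ∃ y' : ∀ _ : V, Fin k → Fin 2,
      φ (msg y') = φ (msg y) ∧ ∀ i : {i // GE i v}, y' i.1 = (fun i : {i // GE i v} => y i.1) i :=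
    ⟨y, rfl, fun _ => rfl⟩
  rw [dif_pos hex]
  exact key v _ y (fun i hi => hex.choose_spec.2 ⟨i, hi⟩) hex.choose_spec.1

end IC

/-- If a `(t, r)` index code exists for the lexicographic
product `G ∘ F` (with `F` on `[m]`), then `⌊log₂ ω(Γ_t(F))⌋ · β(G) ≤ r`. -/
theorem floor_log_cliqueNum_mul_broadcastRate_le
    {V : Type} [Fintype V]
    (GE : V → V → Prop) (hG : ∀ v, ¬ GE v v)
    (m : ℕ) (hm : 1 ≤ m)
    (FE : Fin m → Fin m → Prop) (hF : ∀ i, ¬ FE i i)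
    (t r : ℕ) (ht : 1 ≤ t)
    (hcode : IC.HasCode (IC.lexProd GE FE) (fun _ => t) r) :
    (Nat.log 2 ((IC.confusionGraph 2 FE (fun _ : Fin m => t)).cliqueNum) : ℝ) *
        IC.broadcastRate GE ≤ (r : ℝ) := by
    classical
  set K := (IC.confusionGraph 2 FE (fun _ : Fin m => t)).cliqueNum with hK
  set k := Nat.log 2 K with hk
  rcases Nat.eq_zero_or_pos k with hk0 | hkpos
  · rw [hk0]
    simpa using (Nat.cast_nonneg r : (0:ℝ) ≤ r)
  · have hKne : K ≠ 0 := by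
      intro h
      rw [h] at hk
      simp [Nat.log_zero_right] at hk
      omega
    have hpow : 2 ^ k ≤ K := Nat.pow_log_le_self 2 hKne
    have hcode' : IC.HasCode GE (fun _ => k) r :=
      IC.hasCode_of_clique GE m t r FE hcode k hpow
    have hmem : (r : ℝ) / k ∈
        {ρ : ℝ | ∃ (t r : ℕ), 1 ≤ t ∧ IC.HasCode GE (fun _ => t) r ∧ ρ = (r : ℝ) / t} :=
      ⟨k, r, hkpos, hcode', rfl⟩
    have hbdd : BddBelow
        {ρ : ℝ | ∃ (t r : ℕ), 1 ≤ t ∧ IC.HasCode GE (fun _ => t) r ∧ ρ = (r : ℝ) / t} := by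
      refine ⟨0, ?_⟩
      rintro ρ ⟨t', r', ht', -, rfl⟩
      positivity
    have hβ : IC.broadcastRate GE ≤ (r : ℝ) / k := csInf_le hbdd hmem
    have hkpos' : (0:ℝ) < k := by exact_mod_cast hkpos
    calc (k : ℝ) * IC.broadcastRate GE ≤ (k : ℝ) * ((r : ℝ) / k) :=
          mul_le_mul_of_nonneg_left hβ hkpos'.le
      _ = r := by field_simp
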